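/- Let Q be a finite quiver, θ ∈ ℤ^k, and m ∈ rep_Q(α) a representation such that det(M_σ(m)) ≠ 0 for some morphism σ : ⊕_{θ_i>0} P_i^{⊕zθ_i} → ⊕_{θ_j<0} P_j^{⊕−zθ_j} of projective ℂQ-modules (for some z ≥ 1). Then m is θ-semistable. -/

import Mathlib

open Quiver

structure QRep (V : Type) [Quiver.{1} V] where
  carrier : V → Type
  [acg : ∀ i, AddCommGroup (carrier i)]
  [mod : ∀ i, Module ℂ (carrier i)]
  map : ∀ {i j : V}, (i ⟶ j) → (carrier i →ₗ[ℂ] carrier j)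

attribute [instance] QRep.acg QRep.mod

variable {V : Type} [Quiver.{1} V]

structure SubRep (M : QRep V) where
  N : ∀ i, Submodule ℂ (M.carrier i)
  compat : ∀ {i j : V} (a : i ⟶ j), ∀ x ∈ N i, M.map a x ∈ N j

noncomputable def QRep.θnum [Fintype V] (θ : V → ℤ) (M : QRep V) : ℤ :=
  ∑ i, θ i * (Module.finrank ℂ (M.carrier i) : ℤ)

noncomputable def SubRep.θnum [Fintype V] {M : QRep V} (θ : V → ℤ) (N : SubRep M) : ℤ :=
  ∑ i, θ i * (Module.finrank ℂ ↥(N.N i) : ℤ)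

def QRep.Semistable [Fintype V] (θ : V → ℤ) (M : QRep V) : Prop :=
  M.θnum θ = 0 ∧ ∀ N : SubRep M, 0 ≤ N.θnum θ

def QRep.Stable [Fintype V] (θ : V → ℤ) (M : QRep V) : Prop :=
  M.Semistable θ ∧ (∃ i, Nontrivial (M.carrier i)) ∧
    ∀ N : SubRep M, N.θnum θ = 0 → (∀ i, N.N i = ⊥) ∨ (∀ i, N.N i = ⊤)

/-- The representation space of a quiver for a dimension vector α. -/
abbrev MRep (V : Type) [Quiver.{1} V] (α : V → ℕ) :=
  ∀ (i j : V), (i ⟶ j) → Matrix (Fin (α j)) (Fin (α i)) ℂ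

/-- Evaluation of an oriented path at a representation: the product of the matrices
attached to the arrows of the path. -/
noncomputable def evalPath {V : Type} [Quiver.{1} V] {α : V → ℕ} (m : MRep V α) :
    ∀ {x y : V}, Quiver.Path x y → Matrix (Fin (α y)) (Fin (α x)) ℂ
  | _, _, Quiver.Path.nil => 1
  | _, _, Quiver.Path.cons p a => m _ _ a * evalPath m p

/-- Evaluation of a ℂ-linear combination of paths (with fixed endpoints) at a
representation. -/
noncomputable def evalComb {V : Type} [Quiver.{1} V] {α : V → ℕ} (m : MRep V α) {x y : V}
    (c : Quiver.Path x y →₀ ℂ) : Matrix (Fin (α y)) (Fin (α x)) ℂ :=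
  c.sum fun p coeff => coeff • evalPath m p

/-- A morphism σ : ⊕ᵢ Pᵢ^{⊕ e i} → ⊕ⱼ Pⱼ^{⊕ f j} of projective left ℂQ-modules is given by a
matrix of linear combinations of paths; `evalσ σ m` is the matrix M_σ(m) obtained by
substituting the matrices of the representation m along each path. -/
noncomputable def evalσ {V : Type} [Quiver.{1} V] {α : V → ℕ} (e f : V → ℕ)
    (σ : ∀ (p : Σ i : V, Fin (e i)) (q : Σ j : V, Fin (f j)), Quiver.Path q.1 p.1 →₀ ℂ)
    (m : MRep V α) :
    Matrix ((p : Σ i : V, Fin (e i)) × Fin (α p.1)) ((q : Σ j : V, Fin (f j)) × Fin (α q.1)) ℂ :=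
  fun r c => evalComb m (σ r.1 c.1) r.2 c.2

/-- A representation in matrix form, viewed as a representation by vector spaces. -/
noncomputable def MRep.toQRep {V : Type} [Quiver.{1} V] {α : V → ℕ} (m : MRep V α) : QRep V where
  carrier i := Fin (α i) → ℂ
  map {i j} a := Matrix.mulVecLin (m i j a)


/-! ### Auxiliary machinery -/

/-- Submodule of functions on a sigma type whose slices lie in given submodules. -/
noncomputable def sigmaSub {T : Type} {κ : T → Type} (P : ∀ t, Submodule ℂ (κ t → ℂ)) :
    Submodule ℂ (((t : T) × κ t) → ℂ) where
  carrier := {v | ∀ t, (fun k => v ⟨t, k⟩) ∈ P t}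
  add_mem' := fun h1 h2 t => (P _).add_mem (h1 t) (h2 t)
  zero_mem' := fun t => (P t).zero_mem
  smul_mem' := fun c _ h t => (P t).smul_mem c (h t)

lemma mem_sigmaSub {T : Type} {κ : T → Type} (P : ∀ t, Submodule ℂ (κ t → ℂ))
    (v : ((t : T) × κ t) → ℂ) : v ∈ sigmaSub P ↔ ∀ t, (fun k => v ⟨t, k⟩) ∈ P t := Iff.rfl

noncomputable def sigmaSubEquiv {T : Type} {κ : T → Type} (P : ∀ t, Submodule ℂ (κ t → ℂ)) :
    ↥(sigmaSub P) ≃ₗ[ℂ] ∀ t, ↥(P t) where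
  toFun v t := ⟨fun k => (v : ((t : T) × κ t) → ℂ) ⟨t, k⟩, v.2 t⟩
  invFun w := ⟨fun c => (w c.1 : κ c.1 → ℂ) c.2, fun t => (w t).2⟩
  map_add' _ _ := rfl
  map_smul' _ _ := rfl
  left_inv _ := rfl
  right_inv _ := rfl

lemma finrank_sigmaSub {T : Type} [Fintype T] {κ : T → Type} [∀ t, Fintype (κ t)]
    (P : ∀ t, Submodule ℂ (κ t → ℂ)) :
    Module.finrank ℂ ↥(sigmaSub P) = ∑ t, Module.finrank ℂ ↥(P t) := by
  rw [(sigmaSubEquiv P).finrank_eq, Module.finrank_pi_fintype]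

lemma sum_sigma_fin (V : Type) [Fintype V] (n f : V → ℕ) :
    (∑ x : (j : V) × Fin (n j), f x.1) = ∑ j, n j * f j := by
  rw [← Finset.univ_sigma_univ, Finset.sum_sigma]
  simp [mul_comm]

lemma evalPath_mulVec_mem {V : Type} [Quiver.{1} V] {α : V → ℕ} (m : MRep V α)
    (N : SubRep m.toQRep) {x y : V} (p : Quiver.Path x y)
    {v : Fin (α x) → ℂ} (hv : v ∈ N.N x) : (evalPath m p).mulVec v ∈ N.N y := by
  induction p with
  | nil => simpa [evalPath, Matrix.one_mulVec] using hv
  | cons p a ih =>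
      have h := N.compat a _ ih
      simp only [evalPath, ← Matrix.mulVec_mulVec]
      exact h

lemma evalComb_mulVec_mem {V : Type} [Quiver.{1} V] {α : V → ℕ} (m : MRep V α)
    (N : SubRep m.toQRep) {x y : V} (c : Quiver.Path x y →₀ ℂ)
    {v : Fin (α x) → ℂ} (hv : v ∈ N.N x) : (evalComb m c).mulVec v ∈ N.N y := by
  classical
  rw [evalComb, Finsupp.sum]
  have hs : (∑ p ∈ c.support, c p • evalPath m p).mulVec v
      = ∑ p ∈ c.support, (c p • evalPath m p).mulVec v :=
    map_sum (Matrix.mulVec.addMonoidHomLeft v) _ _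
  rw [hs]
  refine Submodule.sum_mem _ fun p _ => ?_
  show (c p • evalPath m p).mulVec v ∈ N.N y
  rw [Matrix.smul_mulVec]
  exact (N.N y).smul_mem _ (evalPath_mulVec_mem m N p hv)

/-- if for some z ≥ 1 and some morphism
σ : ⊕_{θᵢ>0} Pᵢ^{⊕zθᵢ} → ⊕_{θⱼ<0} Pⱼ^{⊕−zθⱼ} of projective ℂQ-modules the evaluation
M_σ(m) is square (witnessed by ε) with nonzero determinant, then m is θ-semistable. -/
theorem nonvanishing_semiinvariant_implies_semistable {V : Type} [Quiver.{1} V] [Fintype V]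
    [DecidableEq V] (α : V → ℕ) (θ : V → ℤ) (z : ℕ) (hz : 1 ≤ z)
    (σ : ∀ (p : Σ i : V, Fin (z * (θ i).toNat)) (q : Σ j : V, Fin (z * (-θ j).toNat)),
      Quiver.Path q.1 p.1 →₀ ℂ)
    (m : MRep V α)
    (ε : ((q : Σ j : V, Fin (z * (-θ j).toNat)) × Fin (α q.1)) ≃
      ((p : Σ i : V, Fin (z * (θ i).toNat)) × Fin (α p.1)))
    (hdet : ((evalσ (fun i => z * (θ i).toNat) (fun j => z * (-θ j).toNat) σ m).submatrix
      id ε.symm).det ≠ 0) :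
    m.toQRep.Semistable θ := by
  classical
  set M := evalσ (fun i => z * (θ i).toNat) (fun j => z * (-θ j).toNat) σ m with hMdef
  have hsq : Function.Injective (M.submatrix id ε.symm).mulVec :=
    Matrix.mulVec_injective_iff_isUnit.2
      ((Matrix.isUnit_iff_isUnit_det _).2 (isUnit_iff_ne_zero.2 hdet))
  have hrw : ∀ u, M.mulVec u = (M.submatrix id ε.symm).mulVec (u ∘ ε.symm) := by
    intro u
    funext r
    simp only [Matrix.mulVec, dotProduct, Matrix.submatrix_apply, id, Function.comp]
    exact (Equiv.sum_comp ε.symm (fun c => M r c * u c)).symm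
  have hMinj : Function.Injective M.mulVec := by
    intro u u' h
    rw [hrw u, hrw u'] at h
    have h2 := hsq h
    funext c
    have := congrFun h2 (ε c)
    simpa using this
  have hz' : (0:ℤ) < z := by exact_mod_cast hz
  have htn : ∀ i, (((θ i).toNat : ℤ) - (((-θ i).toNat : ℕ) : ℤ)) = θ i := fun i => by omega
  have expand : ∀ d : V → ℕ, (z:ℤ) * (∑ i, θ i * (d i : ℤ))
      = (∑ i, ((z * (θ i).toNat : ℕ) : ℤ) * d i) - ∑ j, ((z * (-θ j).toNat : ℕ) : ℤ) * d j := by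
    intro d
    rw [Finset.mul_sum, ← Finset.sum_sub_distrib]
    refine Finset.sum_congr rfl fun i _ => ?_
    have h := htn i
    push_cast
    linear_combination (z : ℤ) * (d i : ℤ) * h.symm
  constructor
  · -- θnum = 0
    have hcard : ∑ j, z * (-θ j).toNat * α j = ∑ i, z * (θ i).toNat * α i := by
      have h := Fintype.card_congr ε
      rw [Fintype.card_sigma, Fintype.card_sigma] at h
      simpa [Fintype.card_fin, sum_sigma_fin] using h
    have hθn : m.toQRep.θnum θ = ∑ i, θ i * (α i : ℤ) := by
      unfold QRep.θnum
      refine Finset.sum_congr rfl fun i _ => ?_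
      congr 1
      exact_mod_cast Module.finrank_fin_fun (n := α i) ℂ
    have h0 : (z:ℤ) * (∑ i, θ i * (α i : ℤ)) = 0 := by
      rw [expand α, sub_eq_zero]
      exact_mod_cast (congrArg (Nat.cast : ℕ → ℤ) hcard).symm
    rw [hθn]
    exact (mul_eq_zero.1 h0).resolve_left (by positivity)
  · -- subrepresentations
    intro N
    set d : V → ℕ := fun i => Module.finrank ℂ ↥(N.N i) with hd
    set P : ∀ i : V, Submodule ℂ (Fin (α i) → ℂ) := fun i => N.N i with hP
    set D := sigmaSub (T := (j : V) × Fin (z * (-θ j).toNat))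
      (κ := fun q => Fin (α q.1)) (fun q => P q.1) with hD
    set R := sigmaSub (T := (i : V) × Fin (z * (θ i).toNat))
      (κ := fun p => Fin (α p.1)) (fun p => P p.1) with hR
    have hmap : ∀ v ∈ D, (Matrix.mulVecLin M) v ∈ R := by
      intro v hv r
      have key : (fun a => M.mulVec v ⟨r, a⟩)
          = ∑ q, (evalComb m (σ r q)).mulVec (fun k => v ⟨q, k⟩) := by
        funext a
        simp only [Matrix.mulVec, dotProduct, Finset.sum_apply]
        rw [← Finset.univ_sigma_univ, Finset.sum_sigma]
        rfl
      show (fun a => (Matrix.mulVecLin M) v ⟨r, a⟩) ∈ P r.1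
      simp only [Matrix.mulVecLin_apply]
      rw [key]
      exact Submodule.sum_mem _ fun q _ => evalComb_mulVec_mem m N (σ r q) (hv q)
    have hG : Function.Injective ((Matrix.mulVecLin M).restrict hmap) := by
      intro x y hxy
      have := congrArg Subtype.val hxy
      exact Subtype.ext (hMinj this)
    have hle : Module.finrank ℂ ↥D ≤ Module.finrank ℂ ↥R :=
      LinearMap.finrank_le_finrank_of_injective hG
    have hDr : Module.finrank ℂ ↥D = ∑ j, z * (-θ j).toNat * d j := by
      rw [hD, finrank_sigmaSub]
      exact sum_sigma_fin V _ d
    have hRr : Module.finrank ℂ ↥R = ∑ i, z * (θ i).toNat * d i := by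
      rw [hR, finrank_sigmaSub]
      exact sum_sigma_fin V _ d
    rw [hDr, hRr] at hle
    have hle' : (∑ j, ((z * (-θ j).toNat : ℕ) : ℤ) * d j)
        ≤ ∑ i, ((z * (θ i).toNat : ℕ) : ℤ) * d i := by exact_mod_cast hle
    have hpos : (0:ℤ) ≤ (z:ℤ) * N.θnum θ := by
      have : N.θnum θ = ∑ i, θ i * (d i : ℤ) := rfl
      rw [this, expand d]
      omega
    nlinarith [hpos]
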